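/- Let X̄ be a real random variable with continuous strictly increasing CDF F and finite second moment. Among all measurable maps φ with φ(X̄) ~ N(0,1), the mean-square error E[(φ(X̄) − X̄)²] is minimized by the monotone map φ*(x) = Φ⁻¹(F(x)), where Φ is the standard normal CDF. -/

import Mathlib

open MeasureTheory ProbabilityTheory

namespace OGTM


/-- `e a t = 1_{t ≤ a} - 1_{t ≤ 0}` written as a difference of interval indicators. -/
noncomputable def e (a t : ℝ) : ℝ :=
  (Set.Ioc 0 a).indicator 1 t - (Set.Ioc a 0).indicator 1 t

lemma e_eq_ite (a t : ℝ) :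
    e a t = (if t ≤ a then (1:ℝ) else 0) - (if t ≤ 0 then (1:ℝ) else 0) := by
  by_cases h1 : t ≤ a <;> by_cases h2 : t ≤ 0 <;>
    simp [e, Set.indicator_apply, Set.mem_Ioc, h1, h2] <;>
    intro h <;> first
      | linarith
      | · exfalso; push_neg at h1 h2; linarith

lemma measurable_e : Measurable (fun p : ℝ × ℝ => e p.1 p.2) := by
  have h1 : MeasurableSet {p : ℝ × ℝ | 0 < p.2 ∧ p.2 ≤ p.1} :=
    (measurableSet_lt measurable_const measurable_snd).inter
      (measurableSet_le measurable_snd measurable_fst)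
  have h2 : MeasurableSet {p : ℝ × ℝ | p.1 < p.2 ∧ p.2 ≤ 0} :=
    (measurableSet_lt measurable_fst measurable_snd).inter
      (measurableSet_le measurable_snd measurable_const)
  have : (fun p : ℝ × ℝ => e p.1 p.2) =
      fun p => (if 0 < p.2 ∧ p.2 ≤ p.1 then (1:ℝ) else 0)
        - (if p.1 < p.2 ∧ p.2 ≤ 0 then (1:ℝ) else 0) := by
    funext p
    simp [e, Set.indicator_apply, Set.mem_Ioc]
  rw [this]
  exact (Measurable.ite h1 measurable_const measurable_const).sub
    (Measurable.ite h2 measurable_const measurable_const)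

lemma integrable_e (a : ℝ) : Integrable (e a) (volume : Measure ℝ) := by
  refine Integrable.sub ?_ ?_ <;>
  · rw [integrable_indicator_iff measurableSet_Ioc]
    exact integrableOn_const (by simp [Real.volume_Ioc])

lemma integral_e (a : ℝ) : ∫ t, e a t = a := by
  unfold e
  rw [integral_sub, integral_indicator_one measurableSet_Ioc,
    integral_indicator_one measurableSet_Ioc, measureReal_def, measureReal_def, Real.volume_Ioc,
    Real.volume_Ioc]
  · rcases le_total 0 a with h | h
    · rw [ENNReal.toReal_ofReal (by linarith), ENNReal.ofReal_of_nonpos (by linarith)]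
      simp
    · rw [ENNReal.ofReal_of_nonpos (by linarith), ENNReal.toReal_ofReal (by linarith)]
      simp
  · rw [integrable_indicator_iff measurableSet_Ioc]
    exact integrableOn_const (by simp [Real.volume_Ioc])
  · rw [integrable_indicator_iff measurableSet_Ioc]
    exact integrableOn_const (by simp [Real.volume_Ioc])

lemma abs_e (a t : ℝ) : |e a t| = (Set.uIoc 0 a).indicator 1 t := by
  by_cases h1 : t ≤ a <;> by_cases h2 : t ≤ 0 <;>
    simp [e_eq_ite, Set.indicator_apply, Set.mem_uIoc, h1, h2] <;>
    simp only [not_le] at h1 h2 <;>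
    first
      | (intro h; linarith)
      | exact (Set.indicator_of_mem (Set.mem_uIoc.2 (Or.inl ⟨h2, h1⟩)) 1).symm
      | exact (Set.indicator_of_mem (Set.mem_uIoc.2 (Or.inr ⟨h1, h2⟩)) 1).symm

lemma integral_abs_e (a : ℝ) : ∫ t, |e a t| = |a| := by
  have : (fun t => |e a t|) = (Set.uIoc 0 a).indicator 1 := funext (abs_e a)
  rw [this, integral_indicator_one measurableSet_uIoc]
  rcases le_total 0 a with h | h
  · rw [Set.uIoc_of_le h, measureReal_def, Real.volume_Ioc, ENNReal.toReal_ofReal (by linarith),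
      abs_of_nonneg h]
    ring
  · rw [Set.uIoc_of_ge h, measureReal_def, Real.volume_Ioc, ENNReal.toReal_ofReal (by linarith),
      abs_of_nonpos h]
    ring




variable {Ω : Type*} [MeasureSpace Ω] [IsProbabilityMeasure (ℙ : Measure Ω)]

lemma int_e_mul (Y X : Ω → ℝ) (hY : Measurable Y) (hX : Measurable X) (s t : ℝ) :
    ∫ ω, e (Y ω) s * e (X ω) t
      = (ℙ {ω | s ≤ Y ω ∧ t ≤ X ω}).toReal
        - (if t ≤ 0 then (ℙ {ω | s ≤ Y ω}).toReal else 0)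
        - (if s ≤ 0 then (ℙ {ω | t ≤ X ω}).toReal else 0)
        + (if s ≤ 0 then (1:ℝ) else 0) * (if t ≤ 0 then (1:ℝ) else 0) := by
  set A : Set Ω := {ω | s ≤ Y ω} with hA
  set B : Set Ω := {ω | t ≤ X ω} with hB
  have mA : MeasurableSet A := measurableSet_le measurable_const hY
  have mB : MeasurableSet B := measurableSet_le measurable_const hX
  set cs : ℝ := if s ≤ 0 then (1:ℝ) else 0 with hcs
  set ct : ℝ := if t ≤ 0 then (1:ℝ) else 0 with hct
  have key : ∀ ω, e (Y ω) s * e (X ω) t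
      = (A ∩ B).indicator 1 ω - ct * A.indicator 1 ω - cs * B.indicator 1 ω + cs * ct := by
    intro ω
    rw [e_eq_ite, e_eq_ite]
    simp only [Set.indicator_apply, Set.mem_inter_iff, hA, hB, hcs, hct,
      Set.mem_setOf_eq, Pi.one_apply]
    split_ifs <;> first | ring1 | (exfalso; tauto)
  simp only [key]
  have iA : Integrable (A.indicator (1 : Ω → ℝ)) ℙ := (integrable_const 1).indicator mA
  have iB : Integrable (B.indicator (1 : Ω → ℝ)) ℙ := (integrable_const 1).indicator mB
  have iAB : Integrable ((A ∩ B).indicator (1 : Ω → ℝ)) ℙ :=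
    (integrable_const 1).indicator (mA.inter mB)
  have i1 : Integrable (fun ω => (A ∩ B).indicator 1 ω - ct * A.indicator 1 ω) ℙ :=
    iAB.sub (iA.const_mul ct)
  have i2 : Integrable
      (fun ω => (A ∩ B).indicator 1 ω - ct * A.indicator 1 ω - cs * B.indicator 1 ω) ℙ :=
    i1.sub (iB.const_mul cs)
  rw [integral_add i2 (integrable_const _), integral_sub i1 (iB.const_mul cs),
    integral_sub iAB (iA.const_mul ct), integral_const_mul, integral_const_mul,
    integral_indicator_one (mA.inter mB), integral_indicator_one mA,
    integral_indicator_one mB, integral_const]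
  have hABs : {ω | s ≤ Y ω ∧ t ≤ X ω} = A ∩ B := rfl
  rw [hABs]
  simp only [measureReal_def, measure_univ, ENNReal.toReal_one, smul_eq_mul, one_mul]
  rw [hcs, hct]
  split_ifs <;> ring

lemma integrable_K (W X : Ω → ℝ) (hW : Measurable W) (hX : Measurable X)
    (hWL2 : MemLp W 2 (ℙ : Measure Ω)) (hXL2 : MemLp X 2 (ℙ : Measure Ω)) :
    Integrable (Function.uncurry (fun ω (p : ℝ × ℝ) => e (W ω) p.1 * e (X ω) p.2))
      ((ℙ : Measure Ω).prod ((volume : Measure ℝ).prod volume)) := by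
  have m1 : Measurable (fun q : Ω × (ℝ × ℝ) => e (W q.1) q.2.1) :=
    measurable_e.comp ((hW.comp measurable_fst).prodMk measurable_snd.fst)
  have m2 : Measurable (fun q : Ω × (ℝ × ℝ) => e (X q.1) q.2.2) :=
    measurable_e.comp ((hX.comp measurable_fst).prodMk measurable_snd.snd)
  have hm : AEStronglyMeasurable
      (Function.uncurry (fun ω (p : ℝ × ℝ) => e (W ω) p.1 * e (X ω) p.2))
      ((ℙ : Measure Ω).prod ((volume : Measure ℝ).prod volume)) :=
    (m1.mul m2).aestronglyMeasurable
  rw [integrable_prod_iff hm]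
  constructor
  · exact ae_of_all _ fun ω => (integrable_e (W ω)).mul_prod (integrable_e (X ω))
  · simp only [Function.uncurry_apply_pair]
    have heq : (fun ω => ∫ p : ℝ × ℝ, ‖e (W ω) p.1 * e (X ω) p.2‖
          ∂((volume : Measure ℝ).prod volume))
        = fun ω => |W ω| * |X ω| := by
      funext ω
      have habs : ∀ p : ℝ × ℝ, ‖e (W ω) p.1 * e (X ω) p.2‖ = |e (W ω) p.1| * |e (X ω) p.2| := by
        intro p; rw [Real.norm_eq_abs, abs_mul]
      simp only [habs]
      exact (integral_prod_mul (fun u => |e (W ω) u|) (fun u => |e (X ω) u|)).trans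
        (by rw [integral_abs_e, integral_abs_e])
    rw [heq]
    refine Integrable.mono' (((hWL2.integrable_sq).add (hXL2.integrable_sq)).div_const 2)
      ((hW.abs.mul hX.abs).aestronglyMeasurable) (ae_of_all _ fun ω => ?_)
    rw [Real.norm_eq_abs, abs_mul, abs_abs, abs_abs]
    simp only [Pi.add_apply]
    nlinarith [sq_nonneg (|W ω| - |X ω|), sq_abs (W ω), sq_abs (X ω)]

lemma repr_eq (W X : Ω → ℝ) (hW : Measurable W) (hX : Measurable X)
    (hWL2 : MemLp W 2 (ℙ : Measure Ω)) (hXL2 : MemLp X 2 (ℙ : Measure Ω)) :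
    ∫ ω, W ω * X ω
      = ∫ p : ℝ × ℝ, (∫ ω, e (W ω) p.1 * e (X ω) p.2) ∂((volume : Measure ℝ).prod volume) := by
  have h1 : ∀ ω : Ω, W ω * X ω
      = ∫ p : ℝ × ℝ, e (W ω) p.1 * e (X ω) p.2 ∂((volume : Measure ℝ).prod volume) := by
    intro ω
    have h2 := integral_prod_mul (μ := (volume : Measure ℝ)) (ν := (volume : Measure ℝ))
      (e (W ω)) (e (X ω))
    rw [integral_e, integral_e] at h2
    exact h2.symm
  calc ∫ ω, W ω * X ω
      = ∫ ω, ∫ p : ℝ × ℝ, e (W ω) p.1 * e (X ω) p.2 ∂((volume : Measure ℝ).prod volume) :=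
        integral_congr_ae (ae_of_all _ h1)
    _ = ∫ p : ℝ × ℝ, (∫ ω, e (W ω) p.1 * e (X ω) p.2) ∂((volume : Measure ℝ).prod volume) :=
        integral_integral_swap (integrable_K W X hW hX hWL2 hXL2)

lemma integral_mul_le (X Y Z : Ω → ℝ) (hX : Measurable X) (hY : Measurable Y)
    (hZ : Measurable Z) (hXL2 : MemLp X 2 (ℙ : Measure Ω))
    (hYL2 : MemLp Y 2 (ℙ : Measure Ω)) (hZL2 : MemLp Z 2 (ℙ : Measure Ω))
    (hlaw : ∀ s, ℙ {ω | s ≤ Y ω} = ℙ {ω | s ≤ Z ω})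
    (hjoint : ∀ s t, ℙ {ω | s ≤ Y ω ∧ t ≤ X ω} ≤ ℙ {ω | s ≤ Z ω ∧ t ≤ X ω}) :
    ∫ ω, Y ω * X ω ≤ ∫ ω, Z ω * X ω := by
  rw [repr_eq Y X hY hX hYL2 hXL2, repr_eq Z X hZ hX hZL2 hXL2]
  refine integral_mono ?_ ?_ fun p => ?_
  · exact (integrable_K Y X hY hX hYL2 hXL2).integral_prod_right
  · exact (integrable_K Z X hZ hX hZL2 hXL2).integral_prod_right
  · simp only
    rw [int_e_mul Y X hY hX p.1 p.2, int_e_mul Z X hZ hX p.1 p.2, hlaw p.1]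
    have h1 : (ℙ {ω | p.1 ≤ Y ω ∧ p.2 ≤ X ω}).toReal
        ≤ (ℙ {ω | p.1 ≤ Z ω ∧ p.2 ≤ X ω}).toReal :=
      ENNReal.toReal_mono (measure_ne_top _ _) (hjoint p.1 p.2)
    gcongr


end OGTM

/-- Let `X̄` be a real random variable with continuous strictly increasing CDF `F`
and finite second moment.  Among all measurable maps `φ` with `φ(X̄) ~ N(0,1)`, the mean-square
error `E[(φ(X̄) − X̄)²]` is minimized by the monotone map `φ*(x) = Φ⁻¹(F(x))`, where `Φ` is the
standard normal CDF. -/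
theorem optimal_gaussian_transport_map
    {Ω : Type*} [MeasureSpace Ω] [IsProbabilityMeasure (ℙ : Measure Ω)]
    (Xb : Ω → ℝ) (hXb : Measurable Xb) (hL2 : MemLp Xb 2 (ℙ : Measure Ω))
    (F : ℝ → ℝ) (hF : ∀ x, F x = cdf (Measure.map Xb ℙ) x)
    (hFcont : Continuous F) (hFmono : StrictMono F)
    (Φinv : ℝ → ℝ) (hΦinvMeas : Measurable Φinv)
    (hΦinv : ∀ p ∈ Set.Ioo (0:ℝ) 1, cdf (gaussianReal 0 1) (Φinv p) = p)
    (hΦinvMono : StrictMonoOn Φinv (Set.Ioo (0:ℝ) 1)) :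
    ∀ φ : ℝ → ℝ, Measurable φ →
      Measure.map (fun ω => φ (Xb ω)) ℙ = gaussianReal 0 1 →
      MemLp (fun ω => φ (Xb ω)) 2 (ℙ : Measure Ω) →
      (∫ ω, (Φinv (F (Xb ω)) - Xb ω)^2) ≤ ∫ ω, (φ (Xb ω) - Xb ω)^2 := by
  intro φ hφ hmapφ hφL2
  -- notation
  set ν : Measure ℝ := Measure.map Xb ℙ with hν
  haveI : IsProbabilityMeasure ν := Measure.isProbabilityMeasure_map hXb.aemeasurable
  set Φ : ℝ → ℝ := fun x => cdf (gaussianReal 0 1) x with hΦdef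
  -- Gaussian interval positivity
  have hgpos : ∀ a b : ℝ, a < b → 0 < (gaussianReal 0 1) (Set.Ioc a b) := by
    intro a b hab
    rcases eq_or_lt_of_le (zero_le (a := (gaussianReal 0 1) (Set.Ioc a b))) with h0 | h0
    · exfalso
      have hv : (volume : Measure ℝ) (Set.Ioc a b) = 0 :=
        (ProbabilityTheory.gaussianReal_absolutelyContinuous' 0 one_ne_zero) h0.symm
      rw [Real.volume_Ioc] at hv
      simp only [ENNReal.ofReal_eq_zero] at hv
      linarith
    · exact h0
  -- Φ strictly monotone
  have hΦsplit : ∀ a b : ℝ, a < b →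
      (gaussianReal 0 1) (Set.Iic b)
        = (gaussianReal 0 1) (Set.Iic a) + (gaussianReal 0 1) (Set.Ioc a b) := by
    intro a b hab
    rw [← measure_union (Set.Iic_disjoint_Ioc le_rfl) measurableSet_Ioc,
      Set.Iic_union_Ioc_eq_Iic hab.le]
  have hΦmono : StrictMono Φ := by
    intro a b hab
    have h1 := hΦsplit a b hab
    have h2 := hgpos a b hab
    simp only [hΦdef, cdf_eq_real, measureReal_def]
    rw [h1, ENNReal.toReal_add (measure_ne_top _ _) (measure_ne_top _ _)]
    have : 0 < ((gaussianReal 0 1) (Set.Ioc a b)).toReal :=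
      ENNReal.toReal_pos h2.ne' (measure_ne_top _ _)
    linarith
  have hΦIoo : ∀ a : ℝ, Φ a ∈ Set.Ioo (0:ℝ) 1 := by
    intro a
    constructor
    · have h1 : Φ (a - 1) < Φ a := hΦmono (by linarith)
      have h2 : 0 ≤ Φ (a - 1) := cdf_nonneg _ _
      linarith
    · have h1 : Φ a < Φ (a + 1) := hΦmono (by linarith)
      have h2 : Φ (a + 1) ≤ 1 := cdf_le_one _ _
      linarith
  -- F takes values in (0,1)
  have hFIoo : ∀ x : ℝ, F x ∈ Set.Ioo (0:ℝ) 1 := by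
    intro x
    constructor
    · have h1 : F (x - 1) < F x := hFmono (by linarith)
      have h2 : (0:ℝ) ≤ F (x - 1) := by rw [hF]; exact cdf_nonneg _ _
      linarith
    · have h1 : F x < F (x + 1) := hFmono (by linarith)
      have h2 : F (x + 1) ≤ 1 := by rw [hF]; exact cdf_le_one _ _
      linarith
  -- F is surjective onto (0,1)
  have hFsurj : ∀ p ∈ Set.Ioo (0:ℝ) 1, ∃ x, F x = p := by
    intro p hp
    have hFc : F = fun x => cdf ν x := funext hF
    have hbot : Filter.Tendsto F Filter.atBot (nhds 0) := by
      rw [hFc]; exact tendsto_cdf_atBot ν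
    have htop : Filter.Tendsto F Filter.atTop (nhds 1) := by
      rw [hFc]; exact tendsto_cdf_atTop ν
    obtain ⟨a, ha⟩ := (hbot.eventually_lt_const hp.1).exists
    obtain ⟨b, hb⟩ := (htop.eventually_const_lt hp.2).exists
    have hab : a < b := hFmono.lt_iff_lt.mp (by linarith)
    have hmem : p ∈ Set.Ioo (F a) (F b) := ⟨ha, hb⟩
    obtain ⟨x, _, hx⟩ := intermediate_value_Ioo hab.le hFcont.continuousOn hmem
    exact ⟨x, hx⟩
  -- Φinv inverts Φ
  have hΦinvΦ : ∀ a : ℝ, Φinv (Φ a) = a := by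
    intro a
    have h1 := hΦinv (Φ a) (hΦIoo a)
    exact hΦmono.injective h1
  -- key equivalence
  have hiff : ∀ x a : ℝ, Φinv (F x) ≤ a ↔ F x ≤ Φ a := by
    intro x a
    constructor
    · intro h
      have h1 : Φ (Φinv (F x)) = F x := hΦinv (F x) (hFIoo x)
      calc F x = Φ (Φinv (F x)) := h1.symm
        _ ≤ Φ a := hΦmono.monotone h
    · intro h
      rcases eq_or_lt_of_le h with h' | h'
      · rw [h', hΦinvΦ a]
      · have := hΦinvMono (hFIoo x) (hΦIoo a) h'
        rw [hΦinvΦ a] at this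
        exact this.le
  -- the transport map pushes ℙ to the Gaussian
  have hgXmeas : Measurable fun ω => Φinv (F (Xb ω)) :=
    (hΦinvMeas.comp hFcont.measurable).comp hXb
  have hmapg : Measure.map (fun ω => Φinv (F (Xb ω))) ℙ = gaussianReal 0 1 := by
    refine Measure.ext_of_Iic _ _ (fun a => ?_)
    rw [Measure.map_apply hgXmeas measurableSet_Iic]
    obtain ⟨xa, hxa⟩ := hFsurj (Φ a) (hΦIoo a)
    have hset : (fun ω => Φinv (F (Xb ω))) ⁻¹' Set.Iic a = Xb ⁻¹' Set.Iic xa := by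
      ext ω
      simp only [Set.mem_preimage, Set.mem_Iic]
      rw [hiff (Xb ω) a, ← hxa, hFmono.le_iff_le]
    rw [hset, ← Measure.map_apply hXb measurableSet_Iic, ← hν]
    have hν1 : ν (Set.Iic xa) = ENNReal.ofReal (F xa) := by
      rw [hF xa, cdf_eq_real, measureReal_def, ENNReal.ofReal_toReal (measure_ne_top _ _)]
    have hγ1 : (gaussianReal 0 1) (Set.Iic a) = ENNReal.ofReal (Φ a) := by
      have hh : Φ a = ((gaussianReal 0 1) (Set.Iic a)).toReal := by
          simp only [hΦdef]; rw [cdf_eq_real, measureReal_def]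
      rw [hh, ENNReal.ofReal_toReal (measure_ne_top _ _)]
    rw [hν1, hγ1, hxa]
  -- abbreviations
  set Y : Ω → ℝ := fun ω => φ (Xb ω) with hYdef
  set Z : Ω → ℝ := fun ω => Φinv (F (Xb ω)) with hZdef
  have hYmeas : Measurable Y := hφ.comp hXb
  have hZmeas : Measurable Z := hgXmeas
  -- Z is L²
  have hidL2 : MemLp id 2 (gaussianReal 0 1) := by
    rw [← hmapφ]
    exact (memLp_map_measure_iff aestronglyMeasurable_id hYmeas.aemeasurable).2 hφL2
  have hZL2 : MemLp Z 2 (ℙ : Measure Ω) := by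
    have h1 : MemLp id 2 (Measure.map Z ℙ) := by rw [hmapg]; exact hidL2
    exact (memLp_map_measure_iff aestronglyMeasurable_id hZmeas.aemeasurable).1 h1
  -- equal second moments
  have hsq : ∫ ω, Z ω ^ 2 = ∫ ω, Y ω ^ 2 := by
    have hsm : AEStronglyMeasurable (fun x : ℝ => x ^ 2) (gaussianReal 0 1) :=
      (measurable_id.pow_const 2).aestronglyMeasurable
    have h1 : ∫ x, x ^ 2 ∂(Measure.map Y ℙ) = ∫ ω, Y ω ^ 2 := by
      rw [integral_map hYmeas.aemeasurable (by rw [hmapφ]; exact hsm)]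
    have h2 : ∫ x, x ^ 2 ∂(Measure.map Z ℙ) = ∫ ω, Z ω ^ 2 := by
      rw [integral_map hZmeas.aemeasurable (by rw [hmapg]; exact hsm)]
    rw [← h1, ← h2, hmapφ, hmapg]
  -- products with X are integrable
  have hmulint : ∀ (W : Ω → ℝ), Measurable W → MemLp W 2 (ℙ : Measure Ω) →
      Integrable (fun ω => W ω * Xb ω) ℙ := by
    intro W hW hWL2
    refine Integrable.mono' (((hWL2.integrable_sq).add (hL2.integrable_sq)).div_const 2)
      ((hW.mul hXb).aestronglyMeasurable) (ae_of_all _ fun ω => ?_)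
    simp only [Pi.add_apply]
    rw [Real.norm_eq_abs, abs_mul]
    nlinarith [sq_nonneg (|W ω| - |Xb ω|), sq_abs (W ω), sq_abs (Xb ω), abs_nonneg (W ω),
      abs_nonneg (Xb ω)]
  -- expansion of the square
  have expand : ∀ (W : Ω → ℝ), Measurable W → MemLp W 2 (ℙ : Measure Ω) →
      ∫ ω, (W ω - Xb ω) ^ 2
        = (∫ ω, W ω ^ 2) - 2 * (∫ ω, W ω * Xb ω) + ∫ ω, Xb ω ^ 2 := by
    intro W hW hWL2
    have iW2 := hWL2.integrable_sq
    have iX2 := hL2.integrable_sq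
    have iWX := hmulint W hW hWL2
    have h1 : ∀ ω : Ω, (W ω - Xb ω) ^ 2 = W ω ^ 2 - 2 * (W ω * Xb ω) + Xb ω ^ 2 := by
      intro ω; ring
    have iWsub : Integrable (fun ω => W ω ^ 2 - 2 * (W ω * Xb ω)) ℙ :=
      iW2.sub (iWX.const_mul 2)
    simp only [h1]
    rw [integral_add iWsub iX2, integral_sub iW2 (iWX.const_mul 2), integral_const_mul]
  -- Fréchet bound comparison of joint distributions
  have hlaw : ∀ s : ℝ, ℙ {ω | s ≤ Y ω} = ℙ {ω | s ≤ Z ω} := by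
    intro s
    have hY1 : ℙ {ω | s ≤ Y ω} = (Measure.map Y ℙ) (Set.Ici s) := by
      rw [Measure.map_apply hYmeas measurableSet_Ici]; rfl
    have hZ1 : ℙ {ω | s ≤ Z ω} = (Measure.map Z ℙ) (Set.Ici s) := by
      rw [Measure.map_apply hZmeas measurableSet_Ici]; rfl
    rw [hY1, hZ1, hmapφ, hmapg]
  have hgmono : Monotone fun x => Φinv (F x) := by
    intro x y hxy
    rcases eq_or_lt_of_le hxy with h | h
    · rw [h]
    · exact (hΦinvMono (hFIoo x) (hFIoo y) (hFmono h)).le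
  have hjoint : ∀ s t : ℝ, ℙ {ω | s ≤ Y ω ∧ t ≤ Xb ω} ≤ ℙ {ω | s ≤ Z ω ∧ t ≤ Xb ω} := by
    intro s t
    by_cases hc : ∀ x : ℝ, s ≤ Φinv (F x) → t ≤ x
    · have hset : {ω | s ≤ Z ω ∧ t ≤ Xb ω} = {ω | s ≤ Z ω} := by
        ext ω
        simp only [Set.mem_setOf_eq, and_iff_left_iff_imp]
        exact fun h => hc (Xb ω) h
      rw [hset, ← hlaw s]
      exact measure_mono fun ω h => h.1
    · push_neg at hc
      obtain ⟨x₀, hx₀s, hx₀t⟩ := hc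
      have hset : {ω | s ≤ Z ω ∧ t ≤ Xb ω} = {ω | t ≤ Xb ω} := by
        ext ω
        simp only [Set.mem_setOf_eq, and_iff_right_iff_imp]
        intro ht
        calc s ≤ Φinv (F x₀) := hx₀s
          _ ≤ Φinv (F (Xb ω)) := hgmono (le_trans hx₀t.le ht)
      rw [hset]
      exact measure_mono fun ω h => h.2
  -- the core inequality
  have hcore : ∫ ω, Y ω * Xb ω ≤ ∫ ω, Z ω * Xb ω :=
    OGTM.integral_mul_le Xb Y Z hXb hYmeas hZmeas hL2 hφL2 hZL2 hlaw hjoint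
  -- conclude
  rw [expand Z hZmeas hZL2, expand Y hYmeas hφL2, hsq]
  linarith
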